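/- Let G[X,Y] be a bipartite multigraph on finite disjoint vertex sets X and Y, and let f assign a natural number to each vertex of X ∪ Y. Then G has a spanning subgraph F with deg_F(v) = f(v) for every vertex v ∈ X ∪ Y if and only if ∑_{x∈X} f(x) = ∑_{y∈Y} f(y) and for every A ⊆ X one has ∑_{x∈A} f(x) ≤ ∑_{y∈Y} min{f(y), e_G(y,A)}. -/
import Mathlib

open Finset

section oreAux
variable {X Y : Type*} [Fintype X] [Fintype Y] [DecidableEq X] [DecidableEq Y]

omit [Fintype X] [DecidableEq Y] in
private lemma ore_gbound_submod (eG : X → Y → ℕ) (f2 : Y → ℕ) (A B : Finset X) :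
    (∑ y, min (f2 y) (∑ x ∈ A ∪ B, eG x y)) + (∑ y, min (f2 y) (∑ x ∈ A ∩ B, eG x y))
      ≤ (∑ y, min (f2 y) (∑ x ∈ A, eG x y)) + (∑ y, min (f2 y) (∑ x ∈ B, eG x y)) := by
  rw [← Finset.sum_add_distrib, ← Finset.sum_add_distrib]
  refine Finset.sum_le_sum fun y _ => ?_
  have h1 : ∑ x ∈ A ∪ B, eG x y + ∑ x ∈ A ∩ B, eG x y
      = ∑ x ∈ A, eG x y + ∑ x ∈ B, eG x y := Finset.sum_union_inter
  have h2 : ∑ x ∈ A, eG x y ≤ ∑ x ∈ A ∪ B, eG x y :=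
    Finset.sum_le_sum_of_subset Finset.subset_union_left
  have h3 : ∑ x ∈ B, eG x y ≤ ∑ x ∈ A ∪ B, eG x y :=
    Finset.sum_le_sum_of_subset Finset.subset_union_right
  omega

private lemma ore_exists (n : ℕ) : ∀ (eG : X → Y → ℕ) (f1 : X → ℕ) (f2 : Y → ℕ),
    (∑ x, f1 x ≤ n) →
    ((∑ x, f1 x) = (∑ y, f2 y)) →
    (∀ A : Finset X, ∑ x ∈ A, f1 x ≤ ∑ y, min (f2 y) (∑ x ∈ A, eG x y)) →
    ∃ eF : X → Y → ℕ, (∀ x y, eF x y ≤ eG x y) ∧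
      (∀ x, ∑ y, eF x y = f1 x) ∧ (∀ y, ∑ x, eF x y = f2 y) := by
  induction n with
  | zero =>
    intro eG f1 f2 hn hsum _
    have h1 : ∀ x, f1 x = 0 := by
      intro x
      have := Finset.single_le_sum (f := f1) (fun i _ => Nat.zero_le _) (mem_univ x)
      omega
    have h2 : ∀ y, f2 y = 0 := by
      intro y
      have := Finset.single_le_sum (f := f2) (fun i _ => Nat.zero_le _) (mem_univ y)
      omega
    exact ⟨fun _ _ => 0, fun _ _ => Nat.zero_le _, by simp [h1], by simp [h2]⟩
  | succ n ih =>
    intro eG f1 f2 hn hsum hcond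
    by_cases h0 : ∑ x, f1 x = 0
    · exact ih eG f1 f2 (by omega) hsum hcond
    · -- pick x with f1 x > 0
      obtain ⟨x, -, hx⟩ : ∃ x ∈ (univ : Finset X), 0 < f1 x := by
        by_contra h
        push_neg at h
        exact h0 (Finset.sum_eq_zero fun i hi => by have := h i hi; omega)
      -- tight sets
      set tight : Finset X → Prop :=
        fun A => ∑ a ∈ A, f1 a = ∑ y, min (f2 y) (∑ a ∈ A, eG a y) with htight
      have hdec : DecidablePred tight := fun A => by rw [htight]; infer_instance
      set T : Finset X := (univ.filter (fun A => tight A ∧ x ∉ A)).sup id with hT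
      have hxT : x ∉ T := by
        intro hmem
        rw [hT, Finset.mem_sup] at hmem
        obtain ⟨A, hA, hxA⟩ := hmem
        simp only [mem_filter] at hA
        exact hA.2.2 hxA
      have hsubT : ∀ A : Finset X, tight A → x ∉ A → A ⊆ T := by
        intro A h1 h2
        exact Finset.le_sup (f := id) (Finset.mem_filter.mpr ⟨mem_univ A, h1, h2⟩)
      have hTtight : tight T := by
        rw [hT]
        refine Finset.sup_induction ?_ ?_ ?_
        · simp only [htight]
          simp
        · intro A hA B hB
          simp only [htight] at hA hB ⊢
          simp only [Finset.sup_eq_union]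
          have hsub := ore_gbound_submod eG f2 A B
          have hui : ∑ a ∈ A ∪ B, f1 a + ∑ a ∈ A ∩ B, f1 a
              = ∑ a ∈ A, f1 a + ∑ a ∈ B, f1 a := Finset.sum_union_inter
          have h1 := hcond (A ∪ B)
          have h2 := hcond (A ∩ B)
          show ∑ a ∈ A ∪ B, f1 a = _
          omega
        · intro A hA
          simp only [mem_filter] at hA
          exact hA.2.1
      -- find the good y
      have hins : ∑ a ∈ insert x T, f1 a = f1 x + ∑ a ∈ T, f1 a :=
        Finset.sum_insert hxT
      have hcT := hcond (insert x T)
      have hkey : ∑ y, min (f2 y) (∑ a ∈ T, eG a y)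
          < ∑ y, min (f2 y) (∑ a ∈ insert x T, eG a y) := by
        simp only [htight] at hTtight
        omega
      obtain ⟨y, -, hy⟩ : ∃ y ∈ (univ : Finset Y),
          min (f2 y) (∑ a ∈ T, eG a y) < min (f2 y) (∑ a ∈ insert x T, eG a y) := by
        by_contra h
        push_neg at h
        exact absurd (Finset.sum_le_sum h) (not_le.mpr hkey)
      have hyins : ∑ a ∈ insert x T, eG a y = eG x y + ∑ a ∈ T, eG a y :=
        Finset.sum_insert hxT
      have hy1 : ∑ a ∈ T, eG a y < f2 y := by omega
      have hy2 : 0 < eG x y := by omega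
      have hf2y : 0 < f2 y := by omega
      -- decremented instance
      set f1' : X → ℕ := Function.update f1 x (f1 x - 1) with hf1'
      set f2' : Y → ℕ := Function.update f2 y (f2 y - 1) with hf2'
      set eG' : X → Y → ℕ := fun a b => if a = x ∧ b = y then eG a b - 1 else eG a b with heG'
      have hs1 : ∑ a, f1' a = (∑ a, f1 a) - 1 := by
        rw [hf1', Finset.sum_update_of_mem (mem_univ x)]
        have : ∑ a ∈ univ \ {x}, f1 a + f1 x = ∑ a, f1 a := by
          rw [Finset.sdiff_singleton_eq_erase]
          exact Finset.sum_erase_add _ _ (mem_univ x)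
        omega
      have hs2 : ∑ b, f2' b = (∑ b, f2 b) - 1 := by
        rw [hf2', Finset.sum_update_of_mem (mem_univ y)]
        have : ∑ b ∈ univ \ {y}, f2 b + f2 y = ∑ b, f2 b := by
          rw [Finset.sdiff_singleton_eq_erase]
          exact Finset.sum_erase_add _ _ (mem_univ y)
        omega
      -- the new condition
      have hcond' : ∀ A : Finset X,
          ∑ a ∈ A, f1' a ≤ ∑ b, min (f2' b) (∑ a ∈ A, eG' a b) := by
        intro A
        -- split the RHS at y
        have hsplitG : ∀ (h2 : Y → ℕ) (e : X → Y → ℕ),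
            ∑ b, min (h2 b) (∑ a ∈ A, e a b)
              = (∑ b ∈ univ.erase y, min (h2 b) (∑ a ∈ A, e a b))
                + min (h2 y) (∑ a ∈ A, e a y) :=
          fun h2 e => (Finset.sum_erase_add _ _ (mem_univ y)).symm
        rw [hsplitG]
        -- the erased parts agree
        have hrest : ∑ b ∈ univ.erase y, min (f2' b) (∑ a ∈ A, eG' a b)
            = ∑ b ∈ univ.erase y, min (f2 b) (∑ a ∈ A, eG a b) := by
          refine Finset.sum_congr rfl fun b hb => ?_
          have hbne : b ≠ y := Finset.ne_of_mem_erase hb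
          rw [hf2', Function.update_of_ne hbne]
          congr 1
          refine Finset.sum_congr rfl fun a _ => ?_
          rw [heG']
          simp [hbne]
        rw [hrest, hf2', Function.update_self]
        by_cases hxA : x ∈ A
        · -- LHS drops by 1, y-entry sum drops by 1
          have hL : ∑ a ∈ A, f1' a = (∑ a ∈ A, f1 a) - 1 := by
            rw [hf1', Finset.sum_update_of_mem hxA]
            have : ∑ a ∈ A \ {x}, f1 a + f1 x = ∑ a ∈ A, f1 a := by
              rw [Finset.sdiff_singleton_eq_erase]
              exact Finset.sum_erase_add _ _ hxA
            have hx1 : f1 x ≤ ∑ a ∈ A, f1 a :=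
              Finset.single_le_sum (fun i _ => Nat.zero_le _) hxA
            omega
          have hE : ∑ a ∈ A, eG' a y = (∑ a ∈ A, eG a y) - 1 := by
            have h1 : ∑ a ∈ A, eG' a y
                = ∑ a ∈ A.erase x, eG' a y + eG' x y :=
              (Finset.sum_erase_add _ _ hxA).symm
            have h2 : ∑ a ∈ A, eG a y
                = ∑ a ∈ A.erase x, eG a y + eG x y :=
              (Finset.sum_erase_add _ _ hxA).symm
            have h3 : ∑ a ∈ A.erase x, eG' a y = ∑ a ∈ A.erase x, eG a y := by
              refine Finset.sum_congr rfl fun a ha => ?_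
              rw [heG']
              simp [Finset.ne_of_mem_erase ha]
            have h4 : eG' x y = eG x y - 1 := by rw [heG']; simp
            omega
          have hexy : eG x y ≤ ∑ a ∈ A, eG a y :=
            Finset.single_le_sum (f := fun a => eG a y) (fun i _ => Nat.zero_le _) hxA
          have hc := hcond A
          rw [hsplitG f2 eG] at hc
          omega
        · -- LHS unchanged, eG' column over A unchanged
          have hL : ∑ a ∈ A, f1' a = ∑ a ∈ A, f1 a := by
            refine Finset.sum_congr rfl fun a ha => ?_
            rw [hf1', Function.update_of_ne (ne_of_mem_of_not_mem ha hxA)]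
          have hE : ∑ a ∈ A, eG' a y = ∑ a ∈ A, eG a y := by
            refine Finset.sum_congr rfl fun a ha => ?_
            have hax : a ≠ x := ne_of_mem_of_not_mem ha hxA
            rw [heG']
            simp [hax]
          have hc := hcond A
          rw [hsplitG f2 eG] at hc
          rw [hL, hE]
          by_cases hAt : tight A
          · -- A ⊆ T so column small
            have hAT : A ⊆ T := hsubT A hAt hxA
            have hcol : ∑ a ∈ A, eG a y ≤ ∑ a ∈ T, eG a y :=
              Finset.sum_le_sum_of_subset hAT
            simp only [htight] at hAt
            rw [hsplitG f2 eG] at hAt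
            omega
          · -- strict slack
            have hAlt : ∑ a ∈ A, f1 a
                < ∑ b ∈ univ.erase y, min (f2 b) (∑ a ∈ A, eG a b)
                  + min (f2 y) (∑ a ∈ A, eG a y) := by
              rcases Nat.lt_or_ge (∑ a ∈ A, f1 a)
                  (∑ b ∈ univ.erase y, min (f2 b) (∑ a ∈ A, eG a b)
                    + min (f2 y) (∑ a ∈ A, eG a y)) with h | h
              · exact h
              · exfalso
                apply hAt
                simp only [htight]
                rw [hsplitG f2 eG]
                omega
            omega
      obtain ⟨eF', hb', hr', hc'⟩ := ih eG' f1' f2' (by omega) (by omega) hcond'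
      refine ⟨fun a b => eF' a b + if a = x ∧ b = y then 1 else 0, ?_, ?_, ?_⟩
      · intro a b
        have := hb' a b
        rw [heG'] at this
        by_cases h : a = x ∧ b = y
        · obtain ⟨ha, hbb⟩ := h
          subst ha; subst hbb
          simp only [and_self, if_true] at this ⊢
          omega
        · simp only [h, if_false] at this ⊢
          omega
      · intro a
        rw [Finset.sum_add_distrib, hr' a]
        have hite : ∑ b, (if a = x ∧ b = y then 1 else 0) = if a = x then 1 else 0 := by
          by_cases h : a = x
          · simp [h]
          · simp [h]
        rw [hite]
        by_cases h : a = x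
        · subst h
          rw [hf1', Function.update_self]
          simp
          omega
        · rw [hf1', Function.update_of_ne h]
          simp [h]
      · intro b
        rw [Finset.sum_add_distrib, hc' b]
        have hite : ∑ a, (if a = x ∧ b = y then 1 else 0) = if b = y then 1 else 0 := by
          by_cases h : b = y
          · simp [h]
          · simp [h]
        rw [hite]
        by_cases h : b = y
        · subst h
          rw [hf2', Function.update_self]
          simp
          omega
        · rw [hf2', Function.update_of_ne h]
          simp [h]

end oreAux

/-- Ore's theorem: a bipartite multigraph `G[X,Y]` has an `f`-factor iff
`f(X) = f(Y)` and for every `A ⊆ X`,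
`∑_{x∈A} f(x) ≤ ∑_{y∈Y} min{f(y), e_G(y,A)}`. -/
theorem bipartite_f_factor_ore
    {X Y : Type*} [Fintype X] [Fintype Y] [DecidableEq X] [DecidableEq Y]
    (eG : X → Y → ℕ) (f : X ⊕ Y → ℕ) :
    (∃ eF : X → Y → ℕ,
      (∀ x y, eF x y ≤ eG x y) ∧
      (∀ x : X, ∑ y, eF x y = f (Sum.inl x)) ∧
      (∀ y : Y, ∑ x, eF x y = f (Sum.inr y)))
    ↔
    ((∑ x : X, f (Sum.inl x)) = (∑ y : Y, f (Sum.inr y)) ∧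
     ∀ A : Finset X,
       ∑ x ∈ A, f (Sum.inl x) ≤
         ∑ y : Y, min (f (Sum.inr y)) (∑ x ∈ A, eG x y)) := by
  constructor
  · rintro ⟨eF, hb, hr, hc⟩
    constructor
    · calc ∑ x : X, f (Sum.inl x) = ∑ x : X, ∑ y : Y, eF x y := by
            exact Finset.sum_congr rfl fun x _ => (hr x).symm
        _ = ∑ y : Y, ∑ x : X, eF x y := Finset.sum_comm
        _ = ∑ y : Y, f (Sum.inr y) := Finset.sum_congr rfl fun y _ => hc y
    · intro A
      calc ∑ x ∈ A, f (Sum.inl x) = ∑ x ∈ A, ∑ y : Y, eF x y :=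
            Finset.sum_congr rfl fun x _ => (hr x).symm
        _ = ∑ y : Y, ∑ x ∈ A, eF x y := Finset.sum_comm
        _ ≤ ∑ y : Y, min (f (Sum.inr y)) (∑ x ∈ A, eG x y) := by
            refine Finset.sum_le_sum fun y _ => le_min ?_ ?_
            · calc ∑ x ∈ A, eF x y ≤ ∑ x : X, eF x y :=
                    Finset.sum_le_sum_of_subset (Finset.subset_univ A)
                _ = f (Sum.inr y) := hc y
            · exact Finset.sum_le_sum fun x _ => hb x y
  · rintro ⟨hsum, hcond⟩
    exact ore_exists (∑ x : X, f (Sum.inl x)) eG (fun x => f (Sum.inl x))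
      (fun y => f (Sum.inr y)) le_rfl hsum hcond
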